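/- For any tree T on n vertices, the global offensive alliance number satisfies γ_o(T) ≤ n/2, i.e., there exists a global offensive alliance of cardinality at most ⌊n/2⌋ (for n ≥ 2). -/

import Mathlib

open SimpleGraph Finset
open scoped Classical

/-- The closed neighborhood `N[v]` of a vertex `v`. -/
noncomputable def closedNbhd {V : Type*} [Fintype V] (G : SimpleGraph V) (v : V) : Finset V :=
  insert v (Finset.univ.filter (fun u => G.Adj v u))

/-- `S` is a dominating set: every vertex outside `S` has a neighbor in `S`. -/
def Dominating {V : Type*} [Fintype V] (G : SimpleGraph V) (S : Finset V) : Prop :=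
  ∀ v, v ∉ S → ∃ u ∈ S, G.Adj v u

/-- `S` is a global defensive alliance. -/
def GlobalDefensiveAlliance {V : Type*} [Fintype V] (G : SimpleGraph V) (S : Finset V) : Prop :=
  Dominating G S ∧ ∀ v ∈ S, (closedNbhd G v \ S).card ≤ (closedNbhd G v ∩ S).card

/-- `S` is a global offensive alliance. -/
def GlobalOffensiveAlliance {V : Type*} [Fintype V] (G : SimpleGraph V) (S : Finset V) : Prop :=
  Dominating G S ∧ ∀ v, v ∉ S → (∃ u ∈ S, G.Adj v u) →
    (closedNbhd G v \ S).card ≤ (closedNbhd G v ∩ S).card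

/-- Edges with both endpoints in `S`. -/
noncomputable def edgesInside {V : Type*} [Fintype V] (G : SimpleGraph V) (S : Finset V) :
    Finset (Sym2 V) :=
  G.edgeFinset.filter (fun e => ∀ x ∈ e, x ∈ S)

/-- Edges with both endpoints outside `S`. -/
noncomputable def edgesOutside {V : Type*} [Fintype V] (G : SimpleGraph V) (S : Finset V) :
    Finset (Sym2 V) :=
  G.edgeFinset.filter (fun e => ∀ x ∈ e, x ∉ S)

/-- Edges with exactly one endpoint in `S`. -/
noncomputable def edgesBetween {V : Type*} [Fintype V] (G : SimpleGraph V) (S : Finset V) :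
    Finset (Sym2 V) :=
  G.edgeFinset.filter (fun e => (∃ x ∈ e, x ∈ S) ∧ (∃ x ∈ e, x ∉ S))

/-- The global defensive alliance number `γ_a(G)`. -/
noncomputable def gammaA {V : Type*} [Fintype V] (G : SimpleGraph V) : ℕ :=
  sInf {k | ∃ S : Finset V, GlobalDefensiveAlliance G S ∧ S.card = k}

/-- The global offensive alliance number `γ_o(G)`. -/
noncomputable def gammaO {V : Type*} [Fintype V] (G : SimpleGraph V) : ℕ :=
  sInf {k | ∃ S : Finset V, GlobalOffensiveAlliance G S ∧ S.card = k}

section Aux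

variable {V : Type*} [Fintype V] {G : SimpleGraph V}

/-- In a tree, adjacent vertices are at different distances from any root. -/
lemma tree_adj_dist_ne (hT : G.IsTree) (r : V) {u v : V} (h : G.Adj u v) :
    G.dist r u ≠ G.dist r v := by
  intro heq
  obtain ⟨p, hp⟩ := hT.isConnected.exists_walk_length_eq_dist r u
  obtain ⟨q, hq⟩ := hT.isConnected.exists_walk_length_eq_dist r v
  have hb : G.IsBridge s(u, v) :=
    (SimpleGraph.isAcyclic_iff_forall_adj_isBridge.mp hT.IsAcyclic) h
  have hmem := (SimpleGraph.isBridge_iff_adj_and_forall_walk_mem_edges.mp hb)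
      (p.reverse.append q)
  rw [SimpleGraph.Walk.edges_append, List.mem_append, SimpleGraph.Walk.edges_reverse,
    List.mem_reverse] at hmem
  rcases hmem with he | he
  · have hv : v ∈ p.support := p.snd_mem_support_of_mem_edges he
    have hsplit := congrArg SimpleGraph.Walk.length (p.take_spec hv)
    rw [SimpleGraph.Walk.length_append] at hsplit
    have h1 : 1 ≤ (p.dropUntil v hv).length := by
      by_contra hcon
      have h0 : (p.dropUntil v hv).length = 0 := by omega
      have := SimpleGraph.Walk.eq_of_length_eq_zero h0
      exact h.ne' this
    have h2 : G.dist r v ≤ (p.takeUntil v hv).length := SimpleGraph.dist_le _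
    omega
  · have hu : u ∈ q.support := q.fst_mem_support_of_mem_edges he
    have hsplit := congrArg SimpleGraph.Walk.length (q.take_spec hu)
    rw [SimpleGraph.Walk.length_append] at hsplit
    have h1 : 1 ≤ (q.dropUntil u hu).length := by
      by_contra hcon
      have h0 : (q.dropUntil u hu).length = 0 := by omega
      have := SimpleGraph.Walk.eq_of_length_eq_zero h0
      exact h.ne this
    have h2 : G.dist r u ≤ (q.takeUntil u hu).length := SimpleGraph.dist_le _
    omega

/-- In a tree, adjacent vertices have distances from a root of different parity. -/
lemma tree_adj_parity (hT : G.IsTree) (r : V) {u v : V} (h : G.Adj u v) :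
    G.dist r u % 2 ≠ G.dist r v % 2 := by
  have hne := tree_adj_dist_ne hT r h
  obtain ⟨p, hp⟩ := hT.isConnected.exists_walk_length_eq_dist r u
  obtain ⟨q, hq⟩ := hT.isConnected.exists_walk_length_eq_dist r v
  have h1 : G.dist r v ≤ G.dist r u + 1 := by
    have := SimpleGraph.dist_le (p.concat h)
    rwa [SimpleGraph.Walk.length_concat, hp] at this
  have h2 : G.dist r u ≤ G.dist r v + 1 := by
    have := SimpleGraph.dist_le (q.concat h.symm)
    rwa [SimpleGraph.Walk.length_concat, hq] at this
  omega

lemma exists_nbr (hT : G.IsTree) (hn : 2 ≤ Fintype.card V) (v : V) : ∃ u, G.Adj v u := by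
  obtain ⟨w, hw⟩ := Fintype.exists_ne_of_one_lt_card (by omega) v
  obtain ⟨p⟩ := hT.isConnected.preconnected v w
  cases p with
  | nil => exact absurd rfl hw
  | cons h _ => exact ⟨_, h⟩

/-- A parity class of distances from a root is a global offensive alliance in a tree. -/
lemma parity_class_goa (hT : G.IsTree) (hn : 2 ≤ Fintype.card V) (r : V) (c : ℕ)
    (hc : c < 2) :
    GlobalOffensiveAlliance G (Finset.univ.filter fun v => G.dist r v % 2 = c) := by
  set S := Finset.univ.filter fun v => G.dist r v % 2 = c with hS
  have hmem : ∀ v, v ∈ S ↔ G.dist r v % 2 = c := by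
    intro v; simp [hS]
  have hnbr : ∀ v, v ∉ S → ∀ u, G.Adj v u → u ∈ S := by
    intro v hv u hadj
    rw [hmem] at hv ⊢
    have := tree_adj_parity hT r hadj
    have h1 : G.dist r v % 2 < 2 := Nat.mod_lt _ (by norm_num)
    have h2 : G.dist r u % 2 < 2 := Nat.mod_lt _ (by norm_num)
    omega
  have hdom : Dominating G S := by
    intro v hv
    obtain ⟨u, hu⟩ := exists_nbr hT hn v
    exact ⟨u, hnbr v hv u hu, hu⟩
  refine ⟨hdom, ?_⟩
  intro v hv _
  obtain ⟨u, hu⟩ := exists_nbr hT hn v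
  have hsub : closedNbhd G v \ S ⊆ {v} := by
    intro x hx
    rw [Finset.mem_sdiff] at hx
    obtain ⟨hx1, hx2⟩ := hx
    rw [closedNbhd, Finset.mem_insert] at hx1
    rcases hx1 with rfl | hx1
    · exact Finset.mem_singleton_self _
    · rw [Finset.mem_filter] at hx1
      exact absurd (hnbr v hv x hx1.2) hx2
  have h1 : (closedNbhd G v \ S).card ≤ 1 := by
    calc (closedNbhd G v \ S).card ≤ ({v} : Finset V).card := Finset.card_le_card hsub
    _ = 1 := Finset.card_singleton _
  have h2 : 1 ≤ (closedNbhd G v ∩ S).card := by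
    refine Finset.card_pos.mpr ⟨u, Finset.mem_inter.mpr ⟨?_, hnbr v hv u hu⟩⟩
    rw [closedNbhd, Finset.mem_insert]
    exact Or.inr (by simp [hu])
  omega

end Aux

/-- For any tree on n ≥ 2 vertices, γ_o(T) ≤ ⌊n/2⌋, witnessed by a global offensive
alliance of cardinality at most ⌊n/2⌋. -/
theorem stmt_1 {V : Type*} [Fintype V] (G : SimpleGraph V) (hT : G.IsTree)
    (hn : 2 ≤ Fintype.card V) :
    (∃ S : Finset V, GlobalOffensiveAlliance G S ∧ S.card ≤ Fintype.card V / 2) ∧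
    gammaO G ≤ Fintype.card V / 2 := by
  have hne : Nonempty V := Fintype.card_pos_iff.mp (by omega)
  obtain ⟨r⟩ := hne
  set A := Finset.univ.filter fun v => G.dist r v % 2 = 0 with hA
  set B := Finset.univ.filter fun v => G.dist r v % 2 = 1 with hB
  have hcard : A.card + B.card = Fintype.card V := by
    have hBeq : B = Finset.univ.filter fun v => ¬ (G.dist r v % 2 = 0) := by
      apply Finset.filter_congr
      intro v _
      constructor
      · intro h; omega
      · intro h
        have : G.dist r v % 2 < 2 := Nat.mod_lt _ (by norm_num)
        omega
    rw [hBeq, Finset.card_filter_add_card_filter_not, Finset.card_univ]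
  have hmain : ∃ S : Finset V, GlobalOffensiveAlliance G S ∧ S.card ≤ Fintype.card V / 2 := by
    by_cases hAB : A.card ≤ Fintype.card V / 2
    · exact ⟨A, parity_class_goa hT hn r 0 (by norm_num), hAB⟩
    · exact ⟨B, parity_class_goa hT hn r 1 (by norm_num), by omega⟩
  refine ⟨hmain, ?_⟩
  obtain ⟨S, hS, hSc⟩ := hmain
  exact le_trans (Nat.sInf_le ⟨S, hS, rfl⟩) hSc
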